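/- Let λ be a scoring rule that extends to a differentiable map on an open neighborhood of Δ° in ℝ^{M+1}. Then for all η, η* ∈ Δ°: B_{f^λ}(η*, η) = −η*_0 · B_{Ψ^λ}(ρ(η*), ρ(η)). Consequently, if λ is proper, then Reg^λ(η ‖ η*) = η*_0 · B_{Ψ^λ}(ρ(η*), ρ(η)) for all η, η* ∈ Δ°. -/

import Mathlib

open scoped BigOperators

/-- The interior of the standard probability simplex in `ℝ^{M+1}`. -/
def posSimplex (M : ℕ) : Set (Fin (M + 1) → ℝ) :=
  {η | (∀ i, 0 < η i) ∧ ∑ i, η i = 1}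

/-- `ρ(η) = (η_1/η_0, …, η_M/η_0)`. -/
noncomputable def rhoOf (M : ℕ) (η : Fin (M + 1) → ℝ) : Fin M → ℝ :=
  fun z => η z.succ / η 0

/-- `η(ρ) = (1, ρ_1, …, ρ_M)/(1 + ρ_1 + ⋯ + ρ_M)`. -/
noncomputable def etaOfRho (M : ℕ) (ρ : Fin M → ℝ) : Fin (M + 1) → ℝ :=
  fun i => Fin.cons (α := fun _ => ℝ) (1 : ℝ) ρ i / (1 + ∑ j, ρ j)

/-- The generating function `Ψ^λ(ρ) = −⟨(1, ρ), λ(η(ρ))⟩` of a scoring rule `λ`. -/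
noncomputable def genFun (M : ℕ)
    (lam : (Fin (M + 1) → ℝ) → (Fin (M + 1) → ℝ)) (ρ : Fin M → ℝ) : ℝ :=
  -∑ i, Fin.cons (α := fun _ => ℝ) (1 : ℝ) ρ i * lam (etaOfRho M ρ) i

/-- Bregman distortion `B_F(u, v) = F(u) − F(v) − ⟨∇F(v), u − v⟩`. -/
noncomputable def bregman {n : ℕ} (F : (Fin n → ℝ) → ℝ) (u v : Fin n → ℝ) : ℝ :=
  F u - F v - fderiv ℝ F v (u - v)

/-! ### Auxiliary continuous linear maps -/

noncomputable def sumCLM (M : ℕ) : (Fin M → ℝ) →L[ℝ] ℝ :=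
  ∑ j, ContinuousLinearMap.proj j

@[simp] lemma sumCLM_apply (M : ℕ) (v : Fin M → ℝ) : sumCLM M v = ∑ j, v j := by
  simp [sumCLM]

noncomputable def consCLM (M : ℕ) : (Fin M → ℝ) →L[ℝ] (Fin (M+1) → ℝ) :=
  ContinuousLinearMap.pi (fun i => Fin.cases 0 (fun z => ContinuousLinearMap.proj z) i)

@[simp] lemma consCLM_apply (M : ℕ) (v : Fin M → ℝ) :
    consCLM M v = Fin.cons (α := fun _ => ℝ) 0 v := by
  funext i
  refine Fin.cases ?_ (fun z => ?_) i <;> simp [consCLM]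

/-! ### Basic simplex facts -/

section basics
variable {M : ℕ} {η : Fin (M+1) → ℝ}

lemma one_add_sum_rho (hη : η ∈ posSimplex M) :
    1 + ∑ z, rhoOf M η z = (η 0)⁻¹ := by
  have h0 : η 0 ≠ 0 := (hη.1 0).ne'
  have hsum : ∑ i, η i = 1 := hη.2
  rw [Fin.sum_univ_succ] at hsum
  have : ∑ z, rhoOf M η z = (∑ z : Fin M, η z.succ) / η 0 := by
    simp [rhoOf, Finset.sum_div]
  rw [this]; field_simp; linarith

lemma cons_one_rho (hη : η ∈ posSimplex M) :
    Fin.cons (α := fun _ => ℝ) (1 : ℝ) (rhoOf M η) = (η 0)⁻¹ • η := by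
  have h0 : η 0 ≠ 0 := (hη.1 0).ne'
  funext i
  refine Fin.cases ?_ (fun z => ?_) i
  · simp [inv_mul_cancel₀ h0]
  · simp [rhoOf, div_eq_inv_mul]

lemma etaOfRho_rhoOf (hη : η ∈ posSimplex M) :
    etaOfRho M (rhoOf M η) = η := by
  have h0 : η 0 ≠ 0 := (hη.1 0).ne'
  funext i
  simp [etaOfRho, one_add_sum_rho hη, cons_one_rho hη, div_eq_inv_mul]
  field_simp

end basics

section deriv
variable {M : ℕ} {lam : (Fin (M + 1) → ℝ) → (Fin (M + 1) → ℝ)}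
  {U : Set (Fin (M + 1) → ℝ)} {η ηs : Fin (M+1) → ℝ}

lemma diff_f {x : Fin (M+1) → ℝ} (hx : DifferentiableAt ℝ lam x) :
    DifferentiableAt ℝ (fun η' => ∑ i, η' i * lam η' i) x := by
  apply DifferentiableAt.fun_sum
  intro i _
  exact ((ContinuousLinearMap.proj (R := ℝ) (φ := fun _ : Fin (M+1) => ℝ) i).differentiableAt).mul
    ((differentiableAt_pi.1 hx) i)

lemma genFun_rho (hη : η ∈ posSimplex M) :
    genFun M lam (rhoOf M η) = -((η 0)⁻¹ * ∑ i, η i * lam η i) := by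
  rw [genFun, etaOfRho_rhoOf hη, cons_one_rho hη, Finset.mul_sum]
  congr 1
  exact Finset.sum_congr rfl fun i _ => by simp [mul_assoc]

lemma fderiv_genFun_apply (h_diff : ∀ x ∈ U, DifferentiableAt ℝ lam x)
    (hη : η ∈ posSimplex M) (hηU : η ∈ U) (v : Fin M → ℝ) :
    fderiv ℝ (genFun M lam) (rhoOf M η) v
      = -((∑ j, v j) * (∑ i, η i * lam η i))
        - fderiv ℝ (fun η' => ∑ i, η' i * lam η' i) η
            (Fin.cons (α := fun _ => ℝ) 0 v - (∑ j, v j) • η) := by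
  classical
  set f : (Fin (M+1) → ℝ) → ℝ := fun η' => ∑ i, η' i * lam η' i with hf_def
  set ρ : Fin M → ℝ := rhoOf M η with hρ_def
  set L : (Fin (M+1) → ℝ) →L[ℝ] ℝ := fderiv ℝ f η with hL_def
  have h0 : (0:ℝ) < η 0 := hη.1 0
  have h0' : η 0 ≠ 0 := h0.ne'
  have hS : HasFDerivAt (fun ρ' : Fin M → ℝ => 1 + ∑ j, ρ' j) (sumCLM M) ρ := by
    have := (sumCLM M).hasFDerivAt (x := ρ)
    have h2 : ⇑(sumCLM M) = fun ρ' : Fin M → ℝ => ∑ j, ρ' j := by funext w; simp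
    rw [h2] at this
    exact this.const_add 1
  have hSρ : 1 + ∑ j, ρ j = (η 0)⁻¹ := one_add_sum_rho hη
  have hSρ0 : 1 + ∑ j, ρ j ≠ 0 := by rw [hSρ]; positivity
  have hinv : HasFDerivAt (fun ρ' : Fin M → ℝ => (1 + ∑ j, ρ' j)⁻¹)
      ((-(((1 + ∑ j, ρ j)) ^ 2)⁻¹) • sumCLM M) ρ := by
    have h1 := hasDerivAt_inv hSρ0
    exact h1.comp_hasFDerivAt ρ hS
  have hcons : HasFDerivAt (fun ρ' : Fin M → ℝ => Fin.cons (α := fun _ => ℝ) (1:ℝ) ρ')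
      (consCLM M) ρ := by
    have := (consCLM M).hasFDerivAt (x := ρ)
    have heq : (fun ρ' : Fin M → ℝ => Fin.cons (α := fun _ => ℝ) (1:ℝ) ρ')
        = fun ρ' => consCLM M ρ' + Fin.cons (α := fun _ => ℝ) (1:ℝ) 0 := by
      funext ρ' i
      refine Fin.cases ?_ (fun z => ?_) i <;> simp
    rw [heq]
    exact this.add_const _
  have hEeq : etaOfRho M = fun ρ' : Fin M → ℝ =>
      (1 + ∑ j, ρ' j)⁻¹ • Fin.cons (α := fun _ => ℝ) (1:ℝ) ρ' := by
    funext ρ' i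
    simp [etaOfRho, div_eq_inv_mul]
  have hE : HasFDerivAt (etaOfRho M)
      (((1 + ∑ j, ρ j)⁻¹) • consCLM M
        + ((-(((1 + ∑ j, ρ j)) ^ 2)⁻¹) • sumCLM M).smulRight
            (Fin.cons (α := fun _ => ℝ) (1:ℝ) ρ)) ρ := by
    rw [hEeq]
    exact hinv.smul hcons
  have hEρ : etaOfRho M ρ = η := etaOfRho_rhoOf hη
  have hfd : HasFDerivAt f L (etaOfRho M ρ) := by
    rw [hEρ]; exact (diff_f (h_diff η hηU)).hasFDerivAt
  have hfE := hfd.comp ρ hE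
  have hg := (hS.mul hfE).neg
  have ev1 : ∀ᶠ ρ' in nhds ρ, (0:ℝ) < 1 + ∑ j, ρ' j := by
    have hpos : (0:ℝ) < 1 + ∑ j, ρ j := by rw [hSρ]; positivity
    exact hS.continuousAt.eventually (eventually_gt_nhds hpos) |>.mono (fun x hx => hx)
  have evEq : genFun M lam =ᶠ[nhds ρ] fun ρ' => -((1 + ∑ j, ρ' j) * f (etaOfRho M ρ')) := by
    filter_upwards [ev1] with ρ' h
    have hne : (1 + ∑ j, ρ' j) ≠ 0 := h.ne'
    simp only [genFun, hf_def]
    rw [Finset.mul_sum]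
    congr 1
    apply Finset.sum_congr rfl
    intro i _
    simp only [etaOfRho]
    field_simp
  have hΨ := hg.congr_of_eventuallyEq evEq
  rw [hΨ.fderiv]
  simp only [ContinuousLinearMap.neg_apply, ContinuousLinearMap.add_apply,
    ContinuousLinearMap.smul_apply, ContinuousLinearMap.comp_apply,
    ContinuousLinearMap.smulRight_apply, sumCLM_apply, consCLM_apply, smul_eq_mul,
    Function.comp_apply, hEρ, hSρ, cons_one_rho hη, inv_pow, inv_inv, smul_smul]
  rw [L.map_add, L.map_smul, L.map_smul, L.map_sub, L.map_smul]
  simp only [smul_eq_mul]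
  field_simp
  rw [hρ_def, cons_one_rho hη, L.map_smul]
  simp only [smul_eq_mul, hf_def]
  field_simp
  ring

lemma bregman_part1 (h_diff : ∀ x ∈ U, DifferentiableAt ℝ lam x)
    (hη : η ∈ posSimplex M) (hηU : η ∈ U) (hηs : ηs ∈ posSimplex M) :
    bregman (fun η' => ∑ i, η' i * lam η' i) ηs η
      = -(ηs 0 * bregman (genFun M lam) (rhoOf M ηs) (rhoOf M η)) := by
  classical
  set f : (Fin (M+1) → ℝ) → ℝ := fun η' => ∑ i, η' i * lam η' i with hf_def
  set L : (Fin (M+1) → ℝ) →L[ℝ] ℝ := fderiv ℝ f η with hL_def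
  have h0 : (0:ℝ) < η 0 := hη.1 0
  have hs0 : (0:ℝ) < ηs 0 := hηs.1 0
  have h0' : η 0 ≠ 0 := h0.ne'
  have hs0' : ηs 0 ≠ 0 := hs0.ne'
  have hsumv : ∑ j, (rhoOf M ηs - rhoOf M η) j = (ηs 0)⁻¹ - (η 0)⁻¹ := by
    have h1 := one_add_sum_rho hη
    have h2 := one_add_sum_rho hηs
    have : ∑ j, (rhoOf M ηs - rhoOf M η) j = (∑ j, rhoOf M ηs j) - ∑ j, rhoOf M η j := by
      simp [Finset.sum_sub_distrib]
    rw [this]; linarith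
  have hcons0v : Fin.cons (α := fun _ => ℝ) (0:ℝ) (rhoOf M ηs - rhoOf M η)
      = (ηs 0)⁻¹ • ηs - (η 0)⁻¹ • η := by
    funext i
    refine Fin.cases ?_ (fun z => ?_) i
    · simp [inv_mul_cancel₀ h0', inv_mul_cancel₀ hs0']
    · simp [rhoOf, div_eq_inv_mul]
  have hD := fderiv_genFun_apply h_diff hη hηU (rhoOf M ηs - rhoOf M η)
  rw [hsumv, hcons0v] at hD
  have harg : (ηs 0)⁻¹ • ηs - (η 0)⁻¹ • η - ((ηs 0)⁻¹ - (η 0)⁻¹) • η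
      = (ηs 0)⁻¹ • (ηs - η) := by module
  rw [harg] at hD
  unfold bregman
  rw [hD, genFun_rho hη, genFun_rho hηs, ← hf_def, ← hL_def]
  rw [L.map_smul]
  simp only [smul_eq_mul]
  field_simp
  ring

lemma fderiv_f_stationary (hd : DifferentiableAt ℝ lam η)
    (hmin : ∀ᶠ t in nhds (0:ℝ), (∑ i, η i * lam η i) ≤ ∑ i, η i * lam (η + t • (ηs - η)) i) :
    fderiv ℝ (fun η' => ∑ i, η' i * lam η' i) η (ηs - η)
      = ∑ i, (ηs i - η i) * lam η i := by
  classical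
  set w : Fin (M+1) → ℝ := ηs - η with hw
  set Λ : (Fin (M+1) → ℝ) →L[ℝ] (Fin (M+1) → ℝ) := fderiv ℝ lam η with hΛ
  have hlam_i : ∀ i, HasFDerivAt (fun η' => lam η' i)
      ((ContinuousLinearMap.proj (R := ℝ) (φ := fun _ : Fin (M+1) => ℝ) i).comp Λ) η := by
    intro i
    exact ((ContinuousLinearMap.proj (R := ℝ) (φ := fun _ : Fin (M+1) => ℝ) i).hasFDerivAt).comp η
      hd.hasFDerivAt
  have hf' : HasFDerivAt (fun η' => ∑ i, η' i * lam η' i)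
      (∑ i, (η i • ((ContinuousLinearMap.proj (R := ℝ) (φ := fun _ : Fin (M+1) => ℝ) i).comp Λ)
        + lam η i • ContinuousLinearMap.proj i)) η := by
    apply HasFDerivAt.fun_sum
    intro i _
    exact ((ContinuousLinearMap.proj (R := ℝ) (φ := fun _ : Fin (M+1) => ℝ) i).hasFDerivAt).mul
      (hlam_i i)
  have hG' : HasFDerivAt (fun η' => ∑ i, η i * lam η' i)
      (∑ i, (η i • ((ContinuousLinearMap.proj (R := ℝ) (φ := fun _ : Fin (M+1) => ℝ) i).comp Λ))) η := by
    apply HasFDerivAt.fun_sum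
    intro i _
    exact (hlam_i i).const_mul (η i)
  have hc : HasDerivAt (fun t : ℝ => η + t • w) w 0 := by
    simpa using ((hasDerivAt_id (0:ℝ)).smul_const w).const_add η
  have hφ : HasDerivAt (fun t : ℝ => ∑ i, η i * lam (η + t • w) i)
      ((∑ i, (η i • ((ContinuousLinearMap.proj (R := ℝ) (φ := fun _ : Fin (M+1) => ℝ) i).comp Λ))) w) 0 := by
    have hG2 : HasFDerivAt (fun η' => ∑ i, η i * lam η' i)
        (∑ i, (η i • ((ContinuousLinearMap.proj (R := ℝ) (φ := fun _ : Fin (M+1) => ℝ) i).comp Λ)))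
        (η + (0:ℝ) • w) := by simpa using hG'
    simpa [Function.comp_def] using hG2.comp_hasDerivAt 0 hc
  have hloc : IsLocalMin (fun t : ℝ => ∑ i, η i * lam (η + t • w) i) 0 := by
    refine hmin.mono fun t ht => ?_
    simpa using ht
  have hzero := hloc.hasDerivAt_eq_zero hφ
  rw [hf'.fderiv]
  have hz2 : ∑ i, η i * Λ w i = 0 := by
    rw [← hzero]
    simp [ContinuousLinearMap.sum_apply]
  simp only [ContinuousLinearMap.sum_apply, ContinuousLinearMap.add_apply,
    ContinuousLinearMap.smul_apply, ContinuousLinearMap.comp_apply,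
    ContinuousLinearMap.proj_apply, smul_eq_mul]
  rw [Finset.sum_add_distrib, hz2]
  simp only [hw, Pi.sub_apply]
  rw [zero_add]
  exact Finset.sum_congr rfl fun i _ => by ring

end deriv

theorem bregman_bayesRisk_eq_neg_weighted_bregman_genFun
    (M : ℕ) (hM : 1 ≤ M)
    (lam : (Fin (M + 1) → ℝ) → (Fin (M + 1) → ℝ))
    (U : Set (Fin (M + 1) → ℝ)) (hU : IsOpen U)
    (hΔU : posSimplex M ⊆ U)
    (h_diff : ∀ η ∈ U, DifferentiableAt ℝ lam η) :
    (∀ η ∈ posSimplex M, ∀ ηs ∈ posSimplex M,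
        bregman (fun η' => ∑ i, η' i * lam η' i) ηs η
          = -(ηs 0 * bregman (genFun M lam) (rhoOf M ηs) (rhoOf M η)))
    ∧ ((∀ ηs ∈ posSimplex M, ∀ ηh ∈ posSimplex M,
          (∑ i, ηs i * lam ηs i) ≤ ∑ i, ηs i * lam ηh i) →
        ∀ η ∈ posSimplex M, ∀ ηs ∈ posSimplex M,
          (∑ i, ηs i * lam η i) - (∑ i, ηs i * lam ηs i)
            = ηs 0 * bregman (genFun M lam) (rhoOf M ηs) (rhoOf M η)) := by
  constructor
  · intro η hη ηs hηs
    exact bregman_part1 h_diff hη (hΔU hη) hηs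
  · intro hprop η hη ηs hηs
    have key := bregman_part1 h_diff hη (hΔU hη) hηs
    set w : Fin (M+1) → ℝ := ηs - η with hw
    -- the perturbed point stays in the simplex near t = 0
    have hmem : ∀ᶠ t in nhds (0:ℝ), η + t • w ∈ posSimplex M := by
      have hpos : ∀ᶠ t in nhds (0:ℝ), ∀ i, 0 < (η + t • w) i := by
        rw [Filter.eventually_all]
        intro i
        have hcont : ContinuousAt (fun t : ℝ => (η + t • w) i) 0 := by
          simp only [Pi.add_apply, Pi.smul_apply, smul_eq_mul]
          fun_prop
        refine hcont.eventually (p := fun x => 0 < x) ?_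
        have hval : (fun t : ℝ => (η + t • w) i) 0 = η i := by simp
        rw [hval]
        exact eventually_gt_nhds (hη.1 i)
      refine hpos.mono fun t ht => ⟨ht, ?_⟩
      have hsw : ∑ i, w i = 0 := by
        simp only [hw, Pi.sub_apply, Finset.sum_sub_distrib, hη.2, hηs.2, sub_self]
      have : ∑ i, (η + t • w) i = (∑ i, η i) + t * ∑ i, w i := by
        simp [Finset.sum_add_distrib, Finset.mul_sum]
      rw [this, hη.2, hsw]; ring
    have hmin : ∀ᶠ t in nhds (0:ℝ),
        (∑ i, η i * lam η i) ≤ ∑ i, η i * lam (η + t • w) i := by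
      refine hmem.mono fun t ht => ?_
      exact hprop η hη (η + t • w) ht
    have hstat := fderiv_f_stationary (h_diff η (hΔU hη)) hmin
    unfold bregman at key ⊢
    rw [hstat] at key
    have hexp : (∑ i, ηs i * lam ηs i) - (∑ i, η i * lam η i) - ∑ i, (ηs i - η i) * lam η i
        = (∑ i, ηs i * lam ηs i) - ∑ i, ηs i * lam η i := by
      rw [sub_sub, ← Finset.sum_add_distrib]
      congr 1
      exact Finset.sum_congr rfl fun i _ => by ring
    rw [hexp] at key
    linarith [key]
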